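/- Let T be a contraction on a complex separable Hilbert space H. The following are equivalent: (i) for every bounded backward sequence {xₙ} of T, the sequence of norms {‖xₙ‖} is constant; (ii) there exists a closed subspace H₂ of H reducing T (i.e. invariant under both T and T*) such that T|_{H₂} is unitary and T|_{H₂^⊥} is of class C_{·0} (i.e. the nonunitary part of T is of class C_{·0}). -/

import Mathlib

open Filter ContinuousLinearMap Topology

section Aux

variable {H : Type*} [NormedAddCommGroup H] [InnerProductSpace ℂ H] [CompleteSpace H]

local notation "⟪" x ", " y "⟫" => @inner ℂ _ _ x y

omit [CompleteSpace H] in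
lemma aux_pow_contraction (S : H →L[ℂ] H) (hS : ∀ u, ‖S u‖ ≤ ‖u‖) :
    ∀ (k : ℕ) (u : H), ‖(S ^ k) u‖ ≤ ‖u‖ := by
  intro k
  induction k with
  | zero => intro u; simp
  | succ k ih =>
    intro u
    rw [pow_succ, ContinuousLinearMap.mul_apply]
    exact (ih (S u)).trans (hS u)

omit [CompleteSpace H] in
lemma aux_antitone (S : H →L[ℂ] H) (hS : ∀ u, ‖S u‖ ≤ ‖u‖) (z : H) :
    Antitone fun k => ‖(S ^ k) z‖ := by
  apply antitone_nat_of_succ_le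
  intro k
  rw [pow_succ', ContinuousLinearMap.mul_apply]
  exact hS _

omit [CompleteSpace H] in
lemma aux_tendsto_norm (S : H →L[ℂ] H) (hS : ∀ u, ‖S u‖ ≤ ‖u‖) (z : H) :
    ∃ l : ℝ, 0 ≤ l ∧ Tendsto (fun k => ‖(S ^ k) z‖) atTop (𝓝 l) := by
  have hb : BddBelow (Set.range fun k => ‖(S ^ k) z‖) :=
    ⟨0, by rintro x ⟨k, rfl⟩; exact norm_nonneg _⟩
  refine ⟨_, ?_, tendsto_atTop_ciInf (aux_antitone S hS z) hb⟩
  exact le_ciInf fun k => norm_nonneg _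

omit [CompleteSpace H] in
lemma aux_tendsto_inner (S : H →L[ℂ] H) (hS : ∀ u, ‖S u‖ ≤ ‖u‖) (z y : H) :
    ∃ L : ℂ, Tendsto (fun k => ⟪(S ^ k) z, (S ^ k) y⟫) atTop (𝓝 L) := by
  have hw : ∀ w : H, ∃ l : ℂ, Tendsto (fun k => ((‖(S ^ k) w‖ : ℂ) ^ 2)) atTop (𝓝 l) := by
    intro w
    obtain ⟨l, -, hl⟩ := aux_tendsto_norm S hS w
    exact ⟨(l : ℂ) ^ 2, (((Complex.continuous_ofReal.tendsto l).comp hl).pow 2)⟩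
  obtain ⟨a, ha⟩ := hw (z + y)
  obtain ⟨b, hb⟩ := hw (z - y)
  obtain ⟨c, hc⟩ := hw (z - Complex.I • y)
  obtain ⟨d, hd⟩ := hw (z + Complex.I • y)
  refine ⟨(a - b + (c - d) * Complex.I) / 4, ?_⟩
  have hmain := ((ha.sub hb).add ((hc.sub hd).mul_const Complex.I)).div_const 4
  refine hmain.congr fun k => ?_
  rw [eq_comm, inner_eq_sum_norm_sq_div_four]
  simp [map_add, map_sub, map_smul]

lemma aux_riesz (S : H →L[ℂ] H)
    (hpow : ∀ (k : ℕ) (u : H), ‖(S ^ k) u‖ ≤ ‖u‖)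
    (g : H → H → ℂ)
    (hg : ∀ z y, Tendsto (fun k => ⟪(S ^ k) z, (S ^ k) y⟫) atTop (𝓝 (g z y))) :
    ∀ z : H, ∃ w : H, ‖w‖ ≤ ‖z‖ ∧ ∀ y, ⟪w, y⟫ = g z y := by
  intro z
  have hadd : ∀ y₁ y₂, g z (y₁ + y₂) = g z y₁ + g z y₂ := by
    intro y₁ y₂
    refine tendsto_nhds_unique (hg z (y₁ + y₂)) ?_
    refine ((hg z y₁).add (hg z y₂)).congr fun k => ?_
    rw [map_add, inner_add_right]
  have hsmul : ∀ (c : ℂ) y, g z (c • y) = c * g z y := by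
    intro c y
    refine tendsto_nhds_unique (hg z (c • y)) ?_
    refine ((hg z y).const_mul c).congr fun k => ?_
    rw [map_smul, inner_smul_right]
  have hbound : ∀ y, ‖g z y‖ ≤ ‖z‖ * ‖y‖ := by
    intro y
    refine le_of_tendsto (hg z y).norm (Eventually.of_forall fun k => ?_)
    calc ‖⟪(S ^ k) z, (S ^ k) y⟫‖ ≤ ‖(S ^ k) z‖ * ‖(S ^ k) y‖ := norm_inner_le_norm _ _
      _ ≤ ‖z‖ * ‖y‖ := mul_le_mul (hpow k z) (hpow k y) (norm_nonneg _) (norm_nonneg _)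
  let f : H →ₗ[ℂ] ℂ :=
    { toFun := g z, map_add' := hadd, map_smul' := hsmul }
  refine ⟨(InnerProductSpace.toDual ℂ H).symm (f.mkContinuous ‖z‖ hbound), ?_, fun y => ?_⟩
  · calc ‖(InnerProductSpace.toDual ℂ H).symm (f.mkContinuous ‖z‖ hbound)‖
        = ‖f.mkContinuous ‖z‖ hbound‖ :=
        (InnerProductSpace.toDual ℂ H).symm.norm_map _
      _ ≤ ‖z‖ := f.mkContinuous_norm_le (norm_nonneg z) hbound
  · exact InnerProductSpace.toDual_symm_apply

end Aux

/-- For a contraction `T` on a complex separable Hilbert space, every bounded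
backward sequence of `T` has constant norms iff there is a closed subspace `H₂` reducing `T`
(invariant under `T` and `T*`) such that `T|_{H₂}` is unitary and `T|_{H₂ᗮ}` is of class `C·₀`
(its adjoint being `T*|_{H₂ᗮ}`). -/
theorem stmt_13
    {H : Type*} [NormedAddCommGroup H] [InnerProductSpace ℂ H] [CompleteSpace H]
    [TopologicalSpace.SeparableSpace H]
    (T : H →L[ℂ] H) (hT : ∀ x : H, ‖T x‖ ≤ ‖x‖) :
    (∀ xs : ℕ → H, (∀ n : ℕ, T (xs (n + 1)) = xs n) →
        (∃ C : ℝ, ∀ n : ℕ, ‖xs n‖ ≤ C) → ∀ n : ℕ, ‖xs n‖ = ‖xs 0‖) ↔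
    (∃ H₂ : Submodule ℂ H, IsClosed (H₂ : Set H) ∧
        (∀ x ∈ H₂, T x ∈ H₂) ∧
        (∀ x ∈ H₂, ContinuousLinearMap.adjoint T x ∈ H₂) ∧
        (∀ x ∈ H₂, ‖T x‖ = ‖x‖) ∧
        (∀ y ∈ H₂, ∃ x ∈ H₂, T x = y) ∧
        (∀ x ∈ H₂ᗮ, Filter.liminf
          (fun n : ℕ => ‖((ContinuousLinearMap.adjoint T) ^ n) x‖) Filter.atTop = 0)) := by
  classical
  have hT1 : ‖T‖ ≤ 1 := T.opNorm_le_bound zero_le_one (fun x => by simpa using hT x)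
  have hS : ∀ u : H, ‖ContinuousLinearMap.adjoint T u‖ ≤ ‖u‖ := by
    intro u
    calc ‖ContinuousLinearMap.adjoint T u‖ ≤ ‖ContinuousLinearMap.adjoint T‖ * ‖u‖ :=
        (ContinuousLinearMap.adjoint T).le_opNorm u
      _ ≤ 1 * ‖u‖ := by
        apply mul_le_mul_of_nonneg_right _ (norm_nonneg u)
        calc ‖ContinuousLinearMap.adjoint T‖ = ‖T‖ :=
            (ContinuousLinearMap.adjoint :
              (H →L[ℂ] H) ≃ₗᵢ⋆[ℂ] (H →L[ℂ] H)).norm_map T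
          _ ≤ 1 := hT1
      _ = ‖u‖ := one_mul _
  constructor
  · -- forward direction
    intro h
    set S := ContinuousLinearMap.adjoint T with hSdef
    let K : Submodule ℂ H :=
      { carrier := {x | ∃ xs : ℕ → H, xs 0 = x ∧ (∀ n, T (xs (n+1)) = xs n) ∧
          ∃ C, ∀ n, ‖xs n‖ ≤ C}
        add_mem' := by
          rintro a b ⟨xa, ha0, haT, Ca, haC⟩ ⟨xb, hb0, hbT, Cb, hbC⟩
          exact ⟨fun n => xa n + xb n, by simp [ha0, hb0], fun n => by rw [map_add, haT, hbT],
            Ca + Cb, fun n => (norm_add_le _ _).trans (add_le_add (haC n) (hbC n))⟩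
        zero_mem' := ⟨fun _ => 0, rfl, fun n => by simp, 0, fun n => by simp⟩
        smul_mem' := by
          rintro c a ⟨xa, ha0, haT, Ca, haC⟩
          exact ⟨fun n => c • xa n, by simp [ha0], fun n => by rw [map_smul, haT],
            ‖c‖ * Ca, fun n => by
              rw [norm_smul]; exact mul_le_mul_of_nonneg_left (haC n) (norm_nonneg c)⟩ }
    have hmem : ∀ x : H, x ∈ K ↔ ∃ xs : ℕ → H, xs 0 = x ∧ (∀ n, T (xs (n+1)) = xs n) ∧
        ∃ C, ∀ n, ‖xs n‖ ≤ C := fun x => Iff.rfl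
    have hTK : ∀ x ∈ K, T x ∈ K ∧ ‖T x‖ = ‖x‖ := by
      rintro x ⟨xs, h0, hTs, C, hC⟩
      have hb : ∀ n, T ((fun n => Nat.casesOn n (T x) xs : ℕ → H) (n+1))
          = (fun n => Nat.casesOn n (T x) xs : ℕ → H) n := by
        intro n
        cases n with
        | zero => show T (xs 0) = T x; rw [h0]
        | succ m => exact hTs m
      have hbd : ∀ n, ‖(fun n => Nat.casesOn n (T x) xs : ℕ → H) n‖ ≤ max ‖T x‖ C := by
        intro n
        cases n with
        | zero => exact le_max_left _ _
        | succ m => exact (hC m).trans (le_max_right _ _)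
      refine ⟨⟨_, rfl, hb, _, hbd⟩, ?_⟩
      have h1 : ‖xs 0‖ = ‖T x‖ := h _ hb ⟨_, hbd⟩ 1
      rw [h0] at h1
      exact h1.symm
    refine ⟨K, ?_, fun x hx => (hTK x hx).1, ?_, fun x hx => (hTK x hx).2, ?_, ?_⟩
    · -- closedness
      apply IsSeqClosed.isClosed
      intro u p hu hup
      choose bs h0 hTb hCex using fun j => (hmem (u j)).mp (hu j)
      have hdist : ∀ (n j j' : ℕ), ‖bs j n - bs j' n‖ = ‖u j - u j'‖ := by
        intro n j j'
        obtain ⟨Cj, hCj⟩ := hCex j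
        obtain ⟨Cj', hCj'⟩ := hCex j'
        have hd := h (fun m => bs j m - bs j' m)
          (fun m => by rw [map_sub, hTb, hTb])
          ⟨Cj + Cj', fun m => (norm_sub_le _ _).trans (add_le_add (hCj m) (hCj' m))⟩ n
        rw [hd, h0, h0]
      have hys : ∀ n, ∃ yn : H, Tendsto (fun j => bs j n) atTop (𝓝 yn) := by
        intro n
        apply cauchySeq_tendsto_of_complete
        have hc : CauchySeq u := hup.cauchySeq
        rw [Metric.cauchySeq_iff] at hc ⊢
        intro ε hε
        obtain ⟨N, hN⟩ := hc ε hε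
        refine ⟨N, fun j hj j' hj' => ?_⟩
        rw [dist_eq_norm, hdist n j j', ← dist_eq_norm]
        exact hN j hj j' hj'
      choose ys hys using hys
      have hnorm : ∀ (n j : ℕ), ‖bs j n‖ = ‖u j‖ := by
        intro n j
        obtain ⟨Cj, hCj⟩ := hCex j
        have hh := h (bs j) (hTb j) ⟨Cj, hCj⟩ n
        rw [hh, h0]
      refine (hmem p).mpr ⟨ys, ?_, ?_, ‖p‖, ?_⟩
      · exact tendsto_nhds_unique ((hys 0).congr fun j => h0 j) hup
      · intro n
        refine tendsto_nhds_unique ?_ (hys n)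
        exact ((T.continuous.tendsto (ys (n+1))).comp (hys (n+1))).congr fun j => hTb j n
      · intro n
        have h1 : Tendsto (fun j => ‖bs j n‖) atTop (𝓝 ‖ys n‖) := (hys n).norm
        have h2 : Tendsto (fun j => ‖u j‖) atTop (𝓝 ‖p‖) := hup.norm
        exact le_of_eq (tendsto_nhds_unique (h1.congr fun j => hnorm n j) h2)
    · -- T* invariance
      rintro x ⟨xs, h0, hTs, C, hC⟩
      have hx1 : xs 1 ∈ K := ⟨fun n => xs (n+1), rfl, fun n => hTs (n+1), C, fun n => hC (n+1)⟩
      have hnorm1 : ‖xs 1‖ = ‖x‖ := by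
        have hh := h xs hTs ⟨C, hC⟩ 1
        rw [hh, h0]
      have hin : (inner ℂ (S x) (xs 1) : ℂ) = inner ℂ x x := by
        rw [hSdef, ContinuousLinearMap.adjoint_inner_left, hTs 0, h0]
      have hsq : ‖S x - xs 1‖ ^ 2 ≤ 0 := by
        rw [norm_sub_sq (𝕜 := ℂ)]
        have h1 : RCLike.re (inner ℂ (S x) (xs 1) : ℂ) = ‖x‖ ^ 2 := by
          rw [hin, inner_self_eq_norm_sq]
        have h2 : ‖S x‖ ≤ ‖x‖ := hS x
        nlinarith [norm_nonneg (S x), norm_nonneg x]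
      have hz : S x = xs 1 := by
        have h3 : ‖S x - xs 1‖ ^ 2 = 0 := le_antisymm hsq (sq_nonneg _)
        have h4 : ‖S x - xs 1‖ = 0 := by
          exact pow_eq_zero_iff (two_ne_zero) |>.mp h3
        exact sub_eq_zero.mp (norm_eq_zero.mp h4)
      rw [hz]
      exact hx1
    · -- surjectivity
      rintro y ⟨xs, h0, hTs, C, hC⟩
      exact ⟨xs 1, ⟨fun n => xs (n+1), rfl, fun n => hTs (n+1), C, fun n => hC (n+1)⟩,
        by rw [hTs 0, h0]⟩
    · -- C·₀ on the orthogonal complement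
      intro x hx
      have hpowc := aux_pow_contraction S hS
      choose g hg using fun z y => aux_tendsto_inner S hS z y
      choose A hA1 hA2 using aux_riesz S hpowc g hg
      have hSS : ∀ (m k : ℕ) (w : H), (S ^ k) ((S ^ m) w) = (S ^ (k + m)) w := by
        intro m k w
        rw [← ContinuousLinearMap.mul_apply, ← pow_add]
      have hback : ∀ n, T (A ((S ^ (n+1)) x)) = A ((S ^ n) x) := by
        intro n
        apply ext_inner_right ℂ
        intro v
        have hL : (inner ℂ (T (A ((S ^ (n+1)) x))) v : ℂ) = inner ℂ (A ((S ^ (n+1)) x)) (S v) := by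
          rw [hSdef, ContinuousLinearMap.adjoint_inner_right]
        rw [hL, hA2, hA2]
        have h1 : Tendsto (fun k => (inner ℂ ((S ^ (k+1)) ((S ^ n) x)) ((S ^ (k+1)) v) : ℂ))
            atTop (𝓝 (g ((S ^ n) x) v)) :=
          (hg ((S ^ n) x) v).comp (tendsto_add_atTop_nat 1)
        refine tendsto_nhds_unique ((hg ((S ^ (n+1)) x) (S v)).congr fun k => ?_) h1
        rw [hSS (n+1) k x, hSS n (k+1) x, show S v = (S ^ 1) v by rw [pow_one], hSS 1 k v]
        have he : k + (n + 1) = k + 1 + n := by omega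
        rw [he]
      have hAxK : A x ∈ K := by
        have hm : A ((S ^ 0) x) ∈ K :=
          ⟨fun n => A ((S ^ n) x), rfl, hback, ‖x‖, fun n => (hA1 _).trans (hpowc n x)⟩
        simpa using hm
      have horth : (inner ℂ (A x) x : ℂ) = 0 := (Submodule.mem_orthogonal K x).mp hx (A x) hAxK
      have hgxx : g x x = 0 := by rw [← hA2 x x, horth]
      obtain ⟨l, hl0, hl⟩ := aux_tendsto_norm S hS x
      have hc : Tendsto (fun k => ((‖(S ^ k) x‖ : ℂ)) ^ 2) atTop (𝓝 ((l : ℂ) ^ 2)) :=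
        ((Complex.continuous_ofReal.tendsto l).comp hl).pow 2
      have hc2 : Tendsto (fun k => (inner ℂ ((S ^ k) x) ((S ^ k) x) : ℂ)) atTop (𝓝 ((l : ℂ) ^ 2)) :=
        hc.congr fun k => (inner_self_eq_norm_sq_to_K _).symm
      have hl20 : ((l : ℂ)) ^ 2 = 0 := tendsto_nhds_unique hc2 (hgxx ▸ hg x x)
      have hlz : l = 0 := by
        have := pow_eq_zero_iff (two_ne_zero) |>.mp hl20
        exact_mod_cast this
      rw [hlz] at hl
      exact hl.liminf_eq
  · -- backward direction
    rintro ⟨K, hclosed, hTinv, hSinv, hiso, hsurj, hC0⟩ xs hback ⟨C, hC⟩ n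
    haveI : CompleteSpace K := hclosed.completeSpace_coe
    set u : ℕ → H := fun m => ((K.orthogonalProjectionOnto (xs m)) : H) with hu
    set v : ℕ → H := fun m => xs m - u m with hv
    have huK : ∀ m, u m ∈ K := fun m => (K.orthogonalProjectionOnto (xs m)).2
    have hvK : ∀ m, v m ∈ Kᗮ := fun m => Submodule.sub_starProjection_mem_orthogonal (K := K) (xs m)
    have hTorth : ∀ w ∈ Kᗮ, T w ∈ Kᗮ := by
      intro w hw
      rw [Submodule.mem_orthogonal]
      intro a ha
      rw [← ContinuousLinearMap.adjoint_inner_left]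
      exact (Submodule.mem_orthogonal K w).mp hw _ (hSinv a ha)
    have huv : ∀ m, T (u (m+1)) = u m ∧ T (v (m+1)) = v m := by
      intro m
      have hxsum : ∀ j, u j + v j = xs j := by
        intro j
        simp only [hv]
        abel
      have hsum : T (u (m+1)) + T (v (m+1)) = u m + v m := by
        rw [← map_add, hxsum (m+1), hback m, ← hxsum m]
      have hz : T (u (m+1)) - u m = v m - T (v (m+1)) := by
        rw [sub_eq_sub_iff_add_eq_add, hsum]
        abel
      have hmem1 : T (u (m+1)) - u m ∈ K := K.sub_mem (hTinv _ (huK (m+1))) (huK m)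
      have hmem2 : T (u (m+1)) - u m ∈ Kᗮ := by
        rw [hz]
        exact Kᗮ.sub_mem (hvK m) (hTorth _ (hvK (m+1)))
      have h0 : T (u (m+1)) - u m = 0 :=
        inner_self_eq_zero.mp ((Submodule.mem_orthogonal K _).mp hmem2 _ hmem1)
      have h1 : T (u (m+1)) = u m := sub_eq_zero.mp h0
      refine ⟨h1, ?_⟩
      have := hsum
      rw [h1] at this
      exact add_left_cancel this
    have hvbound : ∀ m, ‖v m‖ ≤ C := by
      intro m
      have hip : (inner ℂ (u m) (v m) : ℂ) = 0 :=
        (Submodule.mem_orthogonal K _).mp (hvK m) _ (huK m)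
      have hp : ‖u m + v m‖ ^ 2 = ‖u m‖ ^ 2 + ‖v m‖ ^ 2 := by
        rw [norm_add_sq (𝕜 := ℂ), hip]
        simp
      have hx2 : u m + v m = xs m := by simp only [hv]; abel
      rw [hx2] at hp
      have h1 : ‖v m‖ ≤ ‖xs m‖ := by
        nlinarith [norm_nonneg (u m), norm_nonneg (v m), norm_nonneg (xs m)]
      exact h1.trans (hC m)
    have hvz : ∀ m, v m = 0 := by
      intro m
      have hpowv : ∀ k, (T ^ k) (v (m + k)) = v m := by
        intro k
        induction k with
        | zero => simp
        | succ k ih =>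
          rw [pow_succ, ContinuousLinearMap.mul_apply,
            show m + (k + 1) = (m + k) + 1 from rfl, (huv (m + k)).2, ih]
      have hadj : ∀ (k : ℕ) (a b : H),
          (inner ℂ ((T ^ k) a) b : ℂ) = inner ℂ a (((ContinuousLinearMap.adjoint T) ^ k) b) := by
        intro k a b
        rw [show (ContinuousLinearMap.adjoint T) ^ k = ContinuousLinearMap.adjoint (T ^ k) by
          rw [← ContinuousLinearMap.star_eq_adjoint, ← ContinuousLinearMap.star_eq_adjoint,
            ← star_pow]]
        exact (ContinuousLinearMap.adjoint_inner_right _ _ _).symm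
      have hkey : ∀ k, ‖v m‖ ^ 2 ≤ C * ‖((ContinuousLinearMap.adjoint T) ^ k) (v m)‖ := by
        intro k
        calc ‖v m‖ ^ 2 = RCLike.re (inner ℂ (v m) (v m) : ℂ) := (inner_self_eq_norm_sq _).symm
          _ ≤ ‖(inner ℂ (v m) (v m) : ℂ)‖ := RCLike.re_le_norm _
          _ = ‖(inner ℂ (v (m + k)) (((ContinuousLinearMap.adjoint T) ^ k) (v m)) : ℂ)‖ := by
              rw [← hadj, hpowv]
          _ ≤ ‖v (m + k)‖ * ‖((ContinuousLinearMap.adjoint T) ^ k) (v m)‖ :=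
              norm_inner_le_norm _ _
          _ ≤ C * ‖((ContinuousLinearMap.adjoint T) ^ k) (v m)‖ :=
              mul_le_mul_of_nonneg_right (hvbound _) (norm_nonneg _)
      have htend : Tendsto (fun k => ‖((ContinuousLinearMap.adjoint T) ^ k) (v m)‖)
          atTop (𝓝 0) := by
        obtain ⟨l, hl0, hl⟩ := aux_tendsto_norm (ContinuousLinearMap.adjoint T) hS (v m)
        have hleq : l = 0 := by rw [← hl.liminf_eq, hC0 (v m) (hvK m)]
        rwa [hleq] at hl
      have h0 : ‖v m‖ ^ 2 ≤ 0 := by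
        have := ge_of_tendsto (htend.const_mul C) (Eventually.of_forall hkey)
        simpa using this
      have h1 : ‖v m‖ = 0 := le_antisymm (by nlinarith [norm_nonneg (v m)]) (norm_nonneg _)
      exact norm_eq_zero.mp h1
    have hxu : ∀ m, xs m = u m := by
      intro m
      have := hvz m
      rw [hv] at this
      exact sub_eq_zero.mp this
    have hun : ∀ m, ‖u m‖ = ‖u 0‖ := by
      intro m
      induction m with
      | zero => rfl
      | succ m ih =>
        rw [← hiso _ (huK (m+1)), (huv m).1]
        exact ih
    rw [hxu n, hxu 0, hun n]
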